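/- Let h be the (N-1)×(N-1) symmetric tridiagonal matrix with diagonal entries λ_k² + λ_l² and off-diagonal entries -λ_k λ_l, where λ_k, λ_l are positive reals with λ_k ≠ λ_l. Then det h = (λ_k^{2N} - λ_l^{2N})/(λ_k² - λ_l²). -/
import Mathlib


open Matrix

/-- The `(N-1) × (N-1)` symmetric tridiagonal matrix with diagonal entries `a`
and off-diagonal entries `b`. -/
def tridiag (n : ℕ) (a b : ℝ) : Matrix (Fin n) (Fin n) ℝ :=
  Matrix.of fun i j =>
    if (i : ℕ) = (j : ℕ) then a
    else if (i : ℕ) + 1 = (j : ℕ) ∨ (j : ℕ) + 1 = (i : ℕ) then b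
    else 0

lemma tridiag_sub (n : ℕ) (a b : ℝ) :
    (tridiag (n+1) a b).submatrix Fin.succ Fin.succ = tridiag n a b := by
  ext i j
  simp only [tridiag, submatrix_apply, of_apply, Fin.val_succ]
  split_ifs <;> first | rfl | omega

lemma succAbove_one_succ (n : ℕ) (j : Fin n) :
    (1 : Fin (n+2)).succAbove j.succ = j.succ.succ := by
  apply Fin.succAbove_of_le_castSucc
  simp [Fin.le_def]

lemma succAbove_one_zero (n : ℕ) :
    (1 : Fin (n+2)).succAbove 0 = 0 := by
  rw [show (0 : Fin (n+2)) = Fin.castSucc 0 by simp]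
  apply Fin.succAbove_of_castSucc_lt
  simp [Fin.lt_def]

lemma minor1 (n : ℕ) (a b : ℝ) :
    ((tridiag (n+2) a b).submatrix Fin.succ (Fin.succAbove 1)).submatrix Fin.succ Fin.succ
      = tridiag n a b := by
  ext i j
  simp only [submatrix_apply, succAbove_one_succ]
  simp only [tridiag, of_apply, Fin.val_succ]
  split_ifs <;> first | rfl | omega

lemma minor1_det (n : ℕ) (a b : ℝ) :
    ((tridiag (n+2) a b).submatrix Fin.succ (Fin.succAbove 1)).det
      = b * (tridiag n a b).det := by
  rw [det_succ_column_zero, Fin.sum_univ_succ]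
  have h0 : (tridiag (n+2) a b).submatrix Fin.succ (Fin.succAbove 1) 0 0 = b := by
    simp [succAbove_one_zero, tridiag]
  have hi : ∀ i : Fin n,
      (tridiag (n+2) a b).submatrix Fin.succ (Fin.succAbove 1) i.succ 0 = 0 := by
    intro i
    simp [succAbove_one_zero, tridiag]
  simp only [h0, hi, Fin.val_succ, Fin.val_zero, pow_zero, one_mul, mul_zero, zero_mul,
    Finset.sum_const_zero, add_zero, Fin.succAbove_zero, mul_zero]
  simp [minor1 n a b]

lemma tridiag_rec (n : ℕ) (a b : ℝ) :
    (tridiag (n+2) a b).det = a * (tridiag (n+1) a b).det - b^2 * (tridiag n a b).det := by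
  rw [det_succ_row_zero, Fin.sum_univ_succ, Fin.sum_univ_succ]
  have h00 : tridiag (n+2) a b 0 0 = a := by simp [tridiag]
  have h01 : tridiag (n+2) a b 0 (Fin.succ 0) = b := by simp [tridiag]
  have h0j : ∀ j : Fin n, tridiag (n+2) a b 0 j.succ.succ = 0 := by
    intro j; simp [tridiag]
  simp only [h00, h01, h0j, Fin.val_succ, Fin.val_zero, pow_zero, one_mul, mul_zero, zero_mul,
    Finset.sum_const_zero, add_zero, Fin.succAbove_zero]
  rw [tridiag_sub]
  rw [show (Fin.succ 0 : Fin (n+2)) = 1 by rfl, minor1_det]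
  ring

lemma tridiag_closed (lk ll : ℝ) (h : lk ^ 2 - ll ^ 2 ≠ 0) :
    ∀ n : ℕ, (tridiag n (lk ^ 2 + ll ^ 2) (-(lk * ll))).det =
      (lk ^ (2 * (n+1)) - ll ^ (2 * (n+1))) / (lk ^ 2 - ll ^ 2) := by
  have key : ∀ n : ℕ,
      (tridiag n (lk ^ 2 + ll ^ 2) (-(lk * ll))).det =
        (lk ^ (2 * (n+1)) - ll ^ (2 * (n+1))) / (lk ^ 2 - ll ^ 2) ∧
      (tridiag (n+1) (lk ^ 2 + ll ^ 2) (-(lk * ll))).det =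
        (lk ^ (2 * (n+2)) - ll ^ (2 * (n+2))) / (lk ^ 2 - ll ^ 2) := by
    intro n
    induction n with
    | zero =>
      constructor
      · simp [div_self h]
      · rw [show (tridiag 1 (lk ^ 2 + ll ^ 2) (-(lk * ll))).det
            = lk ^ 2 + ll ^ 2 by rw [det_fin_one]; simp [tridiag]]
        rw [eq_div_iff h]; ring
    | succ m ih =>
      refine ⟨ih.2, ?_⟩
      rw [tridiag_rec, ih.1, ih.2]
      field_simp
      ring
  exact fun n => (key n).1

/-- The determinant of the tridiagonal matrix with diagonal `λk² + λl²` and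
off-diagonal `-λk·λl` equals `(λk^{2N} - λl^{2N}) / (λk² - λl²)`. -/
theorem det_tridiag_dln (N : ℕ) (hN : 2 ≤ N) (lk ll : ℝ)
    (hk : 0 < lk) (hl : 0 < ll) (hne : lk ≠ ll) :
    (tridiag (N - 1) (lk ^ 2 + ll ^ 2) (-(lk * ll))).det =
      (lk ^ (2 * N) - ll ^ (2 * N)) / (lk ^ 2 - ll ^ 2) := by
  have h : lk ^ 2 - ll ^ 2 ≠ 0 := by
    intro h
    have h2 : (lk - ll) * (lk + ll) = 0 := by linear_combination h
    rcases mul_eq_zero.mp h2 with h3 | h3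
    · exact hne (by linarith)
    · linarith
  rw [tridiag_closed lk ll h, show N - 1 + 1 = N by omega]
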